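/- A prefix T[1,n] of the Tribonacci word is a palindrome if and only if n = k_{m+4} − 2 for some m ≥ 1, where k are the kernel numbers k_0=0, k_1=k_2=1, k_m = k_{m−1}+k_{m−2}+k_{m−3}−1. -/

import Mathlib

/-- Kernel numbers: `k_0 = 0`, `k_1 = k_2 = 1`, `k_m = k_{m-1}+k_{m-2}+k_{m-3}-1`. -/
def ker : ℕ → ℕ
  | 0 => 0
  | 1 => 1
  | 2 => 1
  | n + 3 => ker (n + 2) + ker (n + 1) + ker n - 1

/-- The Tribonacci substitution `τ(a) = ab`, `τ(b) = ac`, `τ(c) = a`,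
with `a = 0`, `b = 1`, `c = 2`. -/
def tribSub : Fin 3 → List (Fin 3) := fun x =>
  if x = 0 then [0, 1] else if x = 1 then [0, 2] else [0]

/-- Iterates `τ^m(a)`. -/
def tribList : ℕ → List (Fin 3)
  | 0 => [0]
  | n + 1 => (tribList n).flatMap tribSub

/-- The infinite Tribonacci word, the fixed point of `τ` beginning with `a = 0`. -/
def tribWord (i : ℕ) : Fin 3 := (tribList (i + 1)).getD i 0

/-- The prefix `T[1,n]` of the Tribonacci word, of length `n`. -/
def tribPrefix (n : ℕ) : List (Fin 3) := (List.range n).map tribWord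

open List

def tau (l : List (Fin 3)) : List (Fin 3) := l.flatMap tribSub
lemma tau_cons (x : Fin 3) (l : List (Fin 3)) : tau (x :: l) = tribSub x ++ tau l := rfl
lemma tau_append (u v : List (Fin 3)) : tau (u ++ v) = tau u ++ tau v :=
  List.flatMap_append
lemma tribSub_zero_cons (x : Fin 3) : 0 :: (tribSub x).reverse = tribSub x ++ [0] := by
  fin_cases x <;> decide
lemma tau_singleton (x : Fin 3) : tau [x] = tribSub x := by simp [tau]

lemma tau_reverse (w : List (Fin 3)) :
    (tau w ++ [0]).reverse = tau w.reverse ++ [0] := by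
  induction w with
  | nil => rfl
  | cons x w ih =>
    rw [tau_cons, List.append_assoc, List.reverse_append, ih, List.reverse_cons,
      tau_append, tau_singleton]
    rw [List.append_assoc, List.singleton_append, tribSub_zero_cons x, List.append_assoc]

lemma tau_head (w : List (Fin 3)) : tau w = [] ∨ ∃ t, tau w = 0 :: t := by
  cases w with
  | nil => exact Or.inl rfl
  | cons x w =>
    right
    fin_cases x
    · exact ⟨1 :: tau w, rfl⟩
    · exact ⟨2 :: tau w, rfl⟩
    · exact ⟨tau w, rfl⟩

lemma tau_eq_nil (w : List (Fin 3)) (h : tau w = []) : w = [] := by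
  cases w with
  | nil => rfl
  | cons x w =>
    exfalso
    fin_cases x <;> simp [tau_cons, tribSub] at h

lemma tau_ne_cons (w t : List (Fin 3)) (z : Fin 3) (hz : z ≠ 0) : tau w ≠ z :: t := by
  intro h
  rcases tau_head w with h0 | ⟨s, h0⟩ <;> rw [h0] at h
  · simp at h
  · exact hz (List.head_eq_of_cons_eq h.symm)

lemma tau_injective : Function.Injective tau := by
  intro u
  induction u with
  | nil => intro v h; exact (tau_eq_nil v h.symm).symm
  | cons x u ih =>
    intro v h
    cases v with
    | nil => exact absurd (tau_eq_nil _ h) (by simp)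
    | cons y v =>
      rw [tau_cons, tau_cons] at h
      have hxy : x = y ∧ tau u = tau v := by
        fin_cases x <;> fin_cases y <;> simp [tribSub] at h ⊢ <;>
          first
            | exact h
            | exact absurd h (tau_ne_cons _ _ _ (by decide))
            | exact absurd h.symm (tau_ne_cons _ _ _ (by decide))
      rw [hxy.1, ih hxy.2]

lemma pal_tau_iff (w : List (Fin 3)) :
    (tau w ++ [0]).Palindrome ↔ w.Palindrome := by
  constructor
  · intro h
    have h1 : tau w.reverse ++ [0] = tau w ++ [0] := by
      rw [← tau_reverse, h.reverse_eq]
    have h2 : tau w.reverse = tau w := by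
      simpa using h1
    exact List.Palindrome.of_reverse_eq (tau_injective h2)
  · intro h
    apply List.Palindrome.of_reverse_eq
    rw [tau_reverse, h.reverse_eq]

lemma tribList_succ (n : ℕ) : tribList (n + 1) = tau (tribList n) := rfl

lemma tau_prefix_mono {u v : List (Fin 3)} (h : u <+: v) : tau u <+: tau v := by
  obtain ⟨t, rfl⟩ := h
  exact ⟨tau t, (tau_append u t).symm⟩

lemma tribList_prefix_succ (n : ℕ) : tribList n <+: tribList (n + 1) := by
  induction n with
  | zero => decide
  | succ n ih => exact tau_prefix_mono ih

lemma tribList_prefix_le {i j : ℕ} (h : i ≤ j) : tribList i <+: tribList j := by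
  induction j with
  | zero => rw [Nat.le_zero.mp h]
  | succ j ih =>
    rcases Nat.lt_or_ge i (j+1) with h' | h'
    · exact (ih (Nat.lt_succ_iff.mp h')).trans (tribList_prefix_succ j)
    · rw [Nat.le_antisymm h h']

lemma tau_length_ge (w : List (Fin 3)) : w.length ≤ (tau w).length := by
  induction w with
  | nil => simp [tau]
  | cons x w ih =>
    rw [tau_cons, List.length_append, List.length_cons]
    have : 1 ≤ (tribSub x).length := by fin_cases x <;> decide
    omega

lemma tribList_head (n : ℕ) : ∃ t, tribList n = 0 :: t := by
  induction n with
  | zero => exact ⟨[], rfl⟩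
  | succ n ih =>
    obtain ⟨t, ht⟩ := ih
    exact ⟨1 :: tau t, by rw [tribList_succ, ht, tau_cons]; rfl⟩

lemma tribList_length (n : ℕ) : n + 1 ≤ (tribList n).length := by
  induction n with
  | zero => decide
  | succ n ih =>
    obtain ⟨t, ht⟩ := tribList_head n
    have h1 := tau_length_ge t
    rw [tribList_succ, ht, tau_cons]
    rw [ht] at ih
    simp [tribSub] at ih ⊢
    omega

lemma tribList_getElem {m i : ℕ} (h : i < (tribList m).length) :
    (tribList m)[i] = tribWord i := by
  have hlen : i < (tribList (i+1)).length := by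
    have := tribList_length (i+1); omega
  have hW : tribWord i = (tribList (i+1))[i] := List.getD_eq_getElem _ _ hlen
  rcases Nat.le_total m (i+1) with hm | hm
  · rw [hW, (tribList_prefix_le hm).getElem h]
  · rw [hW, (tribList_prefix_le hm).getElem hlen]

lemma tribPrefix_length (n : ℕ) : (tribPrefix n).length = n := by simp [tribPrefix]

lemma tribPrefix_getElem {n i : ℕ} (h : i < (tribPrefix n).length) :
    (tribPrefix n)[i] = tribWord i := by
  simp [tribPrefix]

lemma eq_tribPrefix_of_prefix {l : List (Fin 3)} {m : ℕ} (h : l <+: tribList m) :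
    l = tribPrefix l.length := by
  apply List.ext_getElem (by rw [tribPrefix_length])
  intro i h1 h2
  rw [tribPrefix_getElem h2, ← tribList_getElem (h.length_le.trans_lt' h1|>.trans_le le_rfl)]
  · exact h.getElem h1

lemma tribPrefix_prefix {n m : ℕ} (h : n ≤ (tribList m).length) :
    tribPrefix n <+: tribList m := by
  have h1 : (tribList m).take n <+: tribList m := List.take_prefix n _
  have h2 := eq_tribPrefix_of_prefix h1
  rw [List.length_take, Nat.min_eq_left h] at h2
  rw [← h2]; exact h1

lemma tribPrefix_succ (n : ℕ) :
    tribPrefix (n + 1) = tribPrefix n ++ [tribWord n] := by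
  simp [tribPrefix, List.range_succ]

/-- the length of the image of the n-prefix under tau -/
def g (n : ℕ) : ℕ := (tau (tribPrefix n)).length

lemma tau_tribPrefix_prefix (n : ℕ) :
    tau (tribPrefix n) ++ [0] <+: tribList (n + 2) := by
  have h1 : tribPrefix (n+1) <+: tribList (n+1) := by
    apply tribPrefix_prefix
    have := tribList_length (n+1); omega
  have h2 : tau (tribPrefix (n+1)) <+: tribList (n+2) := by
    rw [tribList_succ (n+1)]; exact tau_prefix_mono h1
  apply List.IsPrefix.trans _ h2
  rw [tribPrefix_succ, tau_append, tau_singleton]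
  apply (List.prefix_append_right_inj _).mpr
  rcases h3 : tribWord n with ⟨v, hv⟩
  interval_cases v <;> simp_all [tribSub] <;> decide

lemma tribPrefix_g (n : ℕ) : tribPrefix (g n + 1) = tau (tribPrefix n) ++ [0] := by
  have h := eq_tribPrefix_of_prefix (tau_tribPrefix_prefix n)
  rw [List.length_append] at h
  simpa [g] using h.symm

lemma g_zero : g 0 = 0 := rfl

lemma g_succ (n : ℕ) : g (n + 1) = g n + (tribSub (tribWord n)).length := by
  rw [g, g, tribPrefix_succ, tau_append, tau_singleton, List.length_append]

lemma g_lt_succ (n : ℕ) : g n < g (n + 1) := by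
  rw [g_succ]
  have : 1 ≤ (tribSub (tribWord n)).length := by
    rcases h3 : tribWord n with ⟨v, hv⟩
    interval_cases v <;> simp [tribSub]
  omega

lemma exists_block (j : ℕ) : ∃ n, g n ≤ j ∧ j < g (n + 1) := by
  induction j with
  | zero => exact ⟨0, le_rfl, g_lt_succ 0⟩
  | succ j ih =>
    obtain ⟨n, h1, h2⟩ := ih
    rcases Nat.lt_or_ge (j+1) (g (n+1)) with h | h
    · exact ⟨n, by omega, h⟩
    · exact ⟨n+1, h, by have := g_lt_succ (n+1); omega⟩

lemma tau_tribPrefix_eq (n : ℕ) :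
    tau (tribPrefix n) = tribPrefix (g n) := by
  have hp : tribPrefix n <+: tribList n := by
    apply tribPrefix_prefix
    have := tribList_length n; omega
  have h2 : tau (tribPrefix n) <+: tribList (n+1) := by
    rw [tribList_succ n]; exact tau_prefix_mono hp
  exact eq_tribPrefix_of_prefix h2

lemma letter_in_block {n j : ℕ} (h1 : g n ≤ j) (h2 : j < g (n + 1)) :
    tribWord j = (tribSub (tribWord n))[j - g n]'(by rw [g_succ] at h2; omega) := by
  have key : tribPrefix (g (n+1)) = tau (tribPrefix n) ++ tribSub (tribWord n) := by
    rw [← tau_tribPrefix_eq (n+1), tribPrefix_succ, tau_append, tau_singleton]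
  have hj : j < (tribPrefix (g (n+1))).length := by rw [tribPrefix_length]; exact h2
  have h3 := tribPrefix_getElem hj
  have h4 := (List.getElem_of_eq key hj).symm.trans h3
  rw [List.getElem_append_right (by simpa [g] using h1)] at h4
  rw [← h4]
  congr 1

lemma tribWord_one : tribWord 1 = 1 := by decide

lemma pal_block (m : ℕ) (hm : 3 ≤ m) (hp : (tribPrefix m).Palindrome) :
    ∃ n, m = g n + 1 := by
  have hrev := hp.reverse_eq
  have hlt : m - 2 < (tribPrefix m).length := by rw [tribPrefix_length]; omega
  have h1 : tribWord (m - 2) = 1 := by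
    have e1 : (tribPrefix m)[m-2]'hlt = tribWord (m-2) := tribPrefix_getElem hlt
    have hlt' : m - 2 < (tribPrefix m).reverse.length := by
      rw [List.length_reverse]; exact hlt
    have e2 := List.getElem_reverse (l := tribPrefix m) (i := m-2) hlt'
    have e3 := List.getElem_of_eq hrev hlt'
    rw [e2] at e3
    have hidx : (tribPrefix m).length - 1 - (m - 2) = 1 := by
      rw [tribPrefix_length]; omega
    have hlt1 : 1 < (tribPrefix m).length := by rw [tribPrefix_length]; omega
    have e4 : (tribPrefix m)[(tribPrefix m).length - 1 - (m-2)]'(by omega) =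
        (tribPrefix m)[1]'hlt1 := by
      congr 1
    rw [e4, tribPrefix_getElem hlt1, tribWord_one] at e3
    rw [← e1, ← e3]
  obtain ⟨n, hn1, hn2⟩ := exists_block (m - 2)
  have hl := letter_in_block hn1 hn2
  have hlen : m - 2 - g n < (tribSub (tribWord n)).length := by
    rw [g_succ] at hn2; omega
  have hl' : (tribSub (tribWord n)).getD (m - 2 - g n) 0 = 1 := by
    rw [List.getD_eq_getElem _ _ hlen, ← hl, h1]
  have hg := g_succ n
  rcases h3 : tribWord n with ⟨v, hv⟩
  rw [h3] at hl' hg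
  interval_cases v
  · have hd : m - 2 - g n = 0 ∨ m - 2 - g n = 1 := by
      simp [tribSub] at hlen ⊢
      rw [h3] at hlen
      simp [tribSub] at hlen
      omega
    rcases hd with hd | hd <;> rw [hd] at hl'
    · simp [tribSub] at hl'
    · refine ⟨n + 1, ?_⟩
      simp [tribSub] at hg
      omega
  · exfalso
    rw [h3] at hlen
    have hd : m - 2 - g n = 0 ∨ m - 2 - g n = 1 := by
      simp [tribSub] at hlen; omega
    rcases hd with hd | hd <;> rw [hd] at hl' <;> simp [tribSub] at hl'
  · exfalso
    rw [h3] at hlen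
    have hd : m - 2 - g n = 0 := by simp [tribSub] at hlen; omega
    rw [hd] at hl'
    simp [tribSub] at hl'

lemma tau_counts (w : List (Fin 3)) :
    (tau w).count 0 = w.length ∧ (tau w).count 1 = w.count 0 ∧
    (tau w).count 2 = w.count 1 := by
  induction w with
  | nil => decide
  | cons x w ih =>
    obtain ⟨i1, i2, i3⟩ := ih
    rw [tau_cons]
    rcases x with ⟨v, hv⟩
    interval_cases v <;>
      simp [tribSub, List.count_cons, List.count_append, i1, i2, i3] <;> omega

lemma tau_length_eq (w : List (Fin 3)) :
    (tau w).length = w.length + w.count 0 + w.count 1 := by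
  induction w with
  | nil => decide
  | cons x w ih =>
    rw [tau_cons]
    rcases x with ⟨v, hv⟩
    interval_cases v <;>
      simp [tribSub, List.count_cons, ih] <;> omega

lemma g_eq (n : ℕ) :
    g n = n + (tribPrefix n).count 0 + (tribPrefix n).count 1 := by
  rw [g, tau_length_eq, tribPrefix_length]

lemma ker_add_three (n : ℕ) :
    ker (n + 3) = ker (n + 2) + ker (n + 1) + ker n - 1 := by
  rfl

lemma one_le_ker : ∀ n, 1 ≤ ker (n + 1) := by
  intro n
  induction n using Nat.strong_induction_on with
  | _ n ih =>
    match n with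
    | 0 => decide
    | 1 => decide
    | 2 => decide
    | (k+3) =>
      have h1 : 1 ≤ ker (k+3) := ih (k+2) (by omega)
      have h2 : 1 ≤ ker (k+2) := ih (k+1) (by omega)
      have e : ker (k+4) = ker (k+3) + ker (k+2) + ker (k+1) - 1 := ker_add_three (k+1)
      show 1 ≤ ker (k+4)
      omega

lemma ker_mono : Monotone ker := by
  apply monotone_nat_of_le_succ
  intro n
  match n with
  | 0 => decide
  | 1 => decide
  | 2 => decide
  | (k+3) =>
    have e : ker (k+4) = ker (k+3) + ker (k+2) + ker (k+1) - 1 := ker_add_three (k+1)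
    have h1 : 1 ≤ ker (k+2) := one_le_ker (k+1)
    have h2 : 1 ≤ ker (k+1) := one_le_ker k
    show ker (k+3) ≤ ker (k+4)
    omega

def chainL : ℕ → ℕ
  | 0 => 1
  | m + 1 => g (chainL m) + 1

lemma chain_facts (k : ℕ) :
    chainL k = ker (k + 5) - 2 ∧
    (tribPrefix (chainL k)).count 0 = ker (k + 4) - 1 ∧
    (tribPrefix (chainL k)).count 1 = ker (k + 3) - 1 ∧
    (tribPrefix (chainL k)).Palindrome := by
  induction k with
  | zero =>
    refine ⟨by decide, by decide, by decide, ?_⟩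
    have : tribPrefix (chainL 0) = [0] := by decide
    rw [this]
    exact List.Palindrome.singleton 0
  | succ k ih =>
    obtain ⟨e1, e2, e3, e4⟩ := ih
    have hich : chainL (k+1) = g (chainL k) + 1 := rfl
    have hch : tribPrefix (chainL (k+1)) = tau (tribPrefix (chainL k)) ++ [0] := by
      rw [hich]; exact tribPrefix_g (chainL k)
    have hg := g_eq (chainL k)
    have hk3 : 1 ≤ ker (k+3) := one_le_ker (k+2)
    have hk4 : 1 ≤ ker (k+4) := one_le_ker (k+3)
    have hk5 : 3 ≤ ker (k+5) := le_trans (by decide : 3 ≤ ker 5) (ker_mono (by omega))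
    have hk6 : ker (k+6) = ker (k+5) + ker (k+4) + ker (k+3) - 1 := ker_add_three (k+3)
    obtain ⟨c1, c2, c3⟩ := tau_counts (tribPrefix (chainL k))
    have hcount0 : (tribPrefix (chainL (k+1))).count 0 = chainL k + 1 := by
      rw [hch, List.count_append, c1, tribPrefix_length]; simp
    have hcount1 : (tribPrefix (chainL (k+1))).count 1 = (tribPrefix (chainL k)).count 0 := by
      rw [hch, List.count_append, c2]; simp
    refine ⟨?_, ?_, ?_, ?_⟩
    · show chainL (k+1) = ker (k+6) - 2
      rw [hich, hg]; omega
    · show _ = ker (k+5) - 1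
      rw [hcount0]; omega
    · show _ = ker (k+4) - 1
      rw [hcount1, e2]
    · rw [hch]; exact (pal_tau_iff _).mpr e4

lemma g_ge (n : ℕ) : n ≤ g n := by rw [g_eq]; omega

lemma chainL_eq_ker (m : ℕ) (hm : 1 ≤ m) : chainL (m - 1) = ker (m + 4) - 2 := by
  have h := (chain_facts (m-1)).1
  rwa [show m - 1 + 5 = m + 4 by omega] at h

lemma main_aux : ∀ n, 1 ≤ n →
    ((tribPrefix n).Palindrome ↔ ∃ m : ℕ, 1 ≤ m ∧ n = ker (m + 4) - 2) := by
  intro n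
  induction n using Nat.strong_induction_on with
  | _ n ih =>
    intro hn
    constructor
    · intro hpal
      rcases Nat.lt_or_ge n 3 with h3 | h3
      · interval_cases n
        · exact ⟨1, le_rfl, by decide⟩
        · exfalso
          have h := hpal.reverse_eq
          rw [show tribPrefix 2 = [0, 1] by decide] at h
          simp at h
      · obtain ⟨n', hn'⟩ := pal_block n h3 hpal
        have heq : tribPrefix n = tau (tribPrefix n') ++ [0] := by
          rw [hn']; exact tribPrefix_g n'
        have hpal' : (tribPrefix n').Palindrome := (pal_tau_iff _).mp (heq ▸ hpal)
        have h1 : 1 ≤ n' := by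
          rcases Nat.eq_zero_or_pos n' with h0 | h0
          · rw [h0, g_zero] at hn'; omega
          · exact h0
        have hlt : n' < n := by have := g_ge n'; omega
        obtain ⟨m, hm, hm2⟩ := (ih n' hlt h1).mp hpal'
        have e : chainL (m - 1) = ker (m + 4) - 2 := chainL_eq_ker m hm
        have e2 : n' = chainL (m - 1) := by omega
        have e3 : n = chainL (m - 1 + 1) := by
          show n = g (chainL (m-1)) + 1
          rw [← e2, ← hn']
        refine ⟨m + 1, by omega, ?_⟩
        have h4 := (chain_facts (m - 1 + 1)).1
        rw [show m - 1 + 1 + 5 = m + 1 + 4 by omega] at h4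
        rw [e3, h4]
    · rintro ⟨m, hm, rfl⟩
      have h := chain_facts (m - 1)
      have e : chainL (m - 1) = ker (m + 4) - 2 := chainL_eq_ker m hm
      rw [← e]
      exact h.2.2.2

/-- `T[1,n]` is a palindrome iff `n = k_{m+4} - 2` for some `m ≥ 1`. -/
theorem tribPrefix_palindrome_iff (n : ℕ) (hn : 1 ≤ n) :
    (tribPrefix n).Palindrome ↔ ∃ m : ℕ, 1 ≤ m ∧ n = ker (m + 4) - 2 := by
  exact main_aux n hn
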